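/- (Theorem 1, limit form.) Let Ṽ₀ : ℝ^k → ℝ be bounded, V₀(b) = Ṽ₀(A b), Ṽ_{t+1} = H̃ Ṽ_t and V_{t+1} = H V_t. Suppose there are functions V* : Δ(S) → ℝ and Ṽ* : 𝒳 → ℝ such that V_t(b) → V*(b) for every b ∈ Δ(S) and Ṽ_t(χ) → Ṽ*(χ) for every χ ∈ 𝒳 as t → ∞. Then Ṽ*(A b) ≤ V*(b) for every b ∈ Δ(S); i.e., the value function of the summarized abstraction is a lower bound on the value of the original game. -/

import Mathlib

open Finset Matrix

section POSG

variable {S A1 A2 O : Type*} [Fintype S] [Fintype A1] [Fintype A2] [Fintype O]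

/-- Expected immediate reward `E_{b,π₁,π₂}[R]`. -/
def expReward (R : S → A1 → A2 → ℝ) (b : S → ℝ) (π1 : A1 → ℝ) (π2 : S → A2 → ℝ) : ℝ :=
  ∑ s, ∑ a1, ∑ a2, b s * π1 a1 * π2 s a2 * R s a1 a2

/-- `Pr_{b,π₁,π₂}[a₁,o]`, the probability that player 1 plays `a1` and observes `o`. -/
def prObs (T : O → S → S → A1 → A2 → ℝ) (b : S → ℝ) (π1 : A1 → ℝ) (π2 : S → A2 → ℝ)
    (a1 : A1) (o : O) : ℝ :=
  π1 a1 * ∑ s, ∑ a2, ∑ s', b s * π2 s a2 * T o s' s a1 a2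

/-- Bayesian belief update `τ(b,a₁,π₂,o)`. -/
noncomputable def beliefUpd (T : O → S → S → A1 → A2 → ℝ) (b : S → ℝ) (π2 : S → A2 → ℝ)
    (a1 : A1) (o : O) : S → ℝ := fun s' =>
  (∑ s, ∑ a2, b s * π2 s a2 * T o s' s a1 a2) /
    (∑ s'', ∑ s, ∑ a2, b s * π2 s a2 * T o s'' s a1 a2)

/-- Value of the stage game under stage strategies `π₁, π₂` with continuation values `V`. -/
noncomputable def stageVal (T : O → S → S → A1 → A2 → ℝ) (R : S → A1 → A2 → ℝ) (γ : ℝ)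
    (V : (S → ℝ) → ℝ) (b : S → ℝ) (π1 : A1 → ℝ) (π2 : S → A2 → ℝ) : ℝ :=
  expReward R b π1 π2 + γ * ∑ a1, ∑ o,
    if 0 < prObs T b π1 π2 a1 o then
      prObs T b π1 π2 a1 o * V (beliefUpd T b π2 a1 o)
    else 0

/-- The exact Bellman (stage-game) operator `H` over beliefs. -/
noncomputable def Hop (T : O → S → S → A1 → A2 → ℝ) (R : S → A1 → A2 → ℝ) (γ : ℝ)
    (V : (S → ℝ) → ℝ) (b : S → ℝ) : ℝ :=
  ⨅ π2 : {π2 : S → A2 → ℝ // ∀ s, π2 s ∈ stdSimplex ℝ A2},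
    ⨆ π1 : {π1 : A1 → ℝ // π1 ∈ stdSimplex ℝ A1},
      stageVal T R γ V b π1.1 π2.1

/-- The abstract stage-game operator `H̃` over characteristic vectors. -/
noncomputable def Habs {k : ℕ} (T : O → S → S → A1 → A2 → ℝ) (R : S → A1 → A2 → ℝ) (γ : ℝ)
    (A : Matrix (Fin k) S ℝ) (W : (Fin k → ℝ) → ℝ) (χ : Fin k → ℝ) : ℝ :=
  ⨅ b : {b : S → ℝ // b ∈ stdSimplex ℝ S ∧ A.mulVec b = χ},
    ⨅ π2 : {π2 : S → A2 → ℝ // ∀ s, π2 s ∈ stdSimplex ℝ A2},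
      ⨆ π1 : {π1 : A1 → ℝ // π1 ∈ stdSimplex ℝ A1},
        stageVal T R γ (fun b' => W (A.mulVec b')) b.1 π1.1 π2.1

end POSG

section Lemmas
set_option linter.unusedSectionVars false
variable {S A1 A2 O : Type*} [Fintype S] [Fintype A1] [Fintype A2] [Fintype O]
variable {T : O → S → S → A1 → A2 → ℝ} {R : S → A1 → A2 → ℝ} {γ : ℝ}
variable {V V1 V2 : (S → ℝ) → ℝ} {C C1 C2 RC : ℝ}
variable {b : S → ℝ} {π1 : A1 → ℝ} {π2 : S → A2 → ℝ}

lemma uniform_mem_simplex (X : Type*) [Fintype X] [Nonempty X] :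
    (fun _ : X => ((Fintype.card X : ℝ))⁻¹) ∈ stdSimplex ℝ X := by
  constructor
  · intro x; positivity
  · rw [Finset.sum_const, Finset.card_univ, nsmul_eq_mul, mul_inv_cancel₀]
    exact_mod_cast Fintype.card_ne_zero (α := X)

lemma prObs_nonneg (hT : ∀ o s' s a1 a2, 0 ≤ T o s' s a1 a2)
    (hb : b ∈ stdSimplex ℝ S) (hπ1 : π1 ∈ stdSimplex ℝ A1)
    (hπ2 : ∀ s, π2 s ∈ stdSimplex ℝ A2) (a1 : A1) (o : O) :
    0 ≤ prObs T b π1 π2 a1 o := by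
  refine mul_nonneg (hπ1.1 a1) ?_
  refine Finset.sum_nonneg fun s _ => Finset.sum_nonneg fun a2 _ =>
    Finset.sum_nonneg fun s' _ => ?_
  exact mul_nonneg (mul_nonneg (hb.1 s) ((hπ2 s).1 a2)) (hT o s' s a1 a2)

lemma sum_prObs (hTsum : ∀ s a1 a2, ∑ o, ∑ s', T o s' s a1 a2 = 1)
    (hb : b ∈ stdSimplex ℝ S) (hπ1 : π1 ∈ stdSimplex ℝ A1)
    (hπ2 : ∀ s, π2 s ∈ stdSimplex ℝ A2) :
    ∑ a1, ∑ o, prObs T b π1 π2 a1 o = 1 := by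
  have key : ∀ a1 : A1, ∑ o, ∑ s, ∑ a2, ∑ s', b s * π2 s a2 * T o s' s a1 a2 = 1 := by
    intro a1
    rw [Finset.sum_comm]
    have h1 : ∀ s : S, ∑ o, ∑ a2, ∑ s', b s * π2 s a2 * T o s' s a1 a2 = b s := by
      intro s
      rw [Finset.sum_comm]
      have h2 : ∀ a2 : A2, ∑ o, ∑ s', b s * π2 s a2 * T o s' s a1 a2
          = b s * π2 s a2 := by
        intro a2
        simp only [← Finset.mul_sum]
        rw [hTsum s a1 a2, mul_one]
      calc ∑ a2, ∑ o, ∑ s', b s * π2 s a2 * T o s' s a1 a2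
          = ∑ a2, b s * π2 s a2 := Finset.sum_congr rfl fun a2 _ => h2 a2
        _ = b s := by rw [← Finset.mul_sum, (hπ2 s).2, mul_one]
    calc ∑ s, ∑ o, ∑ a2, ∑ s', b s * π2 s a2 * T o s' s a1 a2
        = ∑ s, b s := Finset.sum_congr rfl fun s _ => h1 s
      _ = 1 := hb.2
  have hrow : ∀ a1 : A1, ∑ o, prObs T b π1 π2 a1 o = π1 a1 := by
    intro a1
    simp only [prObs]
    rw [← Finset.mul_sum, key a1, mul_one]
  calc ∑ a1, ∑ o, prObs T b π1 π2 a1 o = ∑ a1, π1 a1 :=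
        Finset.sum_congr rfl fun a1 _ => hrow a1
    _ = 1 := hπ1.2

lemma beliefUpd_mem (hT : ∀ o s' s a1 a2, 0 ≤ T o s' s a1 a2)
    (hb : b ∈ stdSimplex ℝ S) (hπ1 : π1 ∈ stdSimplex ℝ A1)
    (hπ2 : ∀ s, π2 s ∈ stdSimplex ℝ A2) {a1 : A1} {o : O}
    (hpos : 0 < prObs T b π1 π2 a1 o) :
    beliefUpd T b π2 a1 o ∈ stdSimplex ℝ S := by
  have hnn : ∀ s' : S, 0 ≤ ∑ s, ∑ a2, b s * π2 s a2 * T o s' s a1 a2 := by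
    intro s'
    refine Finset.sum_nonneg fun s _ => Finset.sum_nonneg fun a2 _ => ?_
    exact mul_nonneg (mul_nonneg (hb.1 s) ((hπ2 s).1 a2)) (hT o s' s a1 a2)
  have hDrel : ∑ s, ∑ a2, ∑ s', b s * π2 s a2 * T o s' s a1 a2
      = ∑ s'', ∑ s, ∑ a2, b s * π2 s a2 * T o s'' s a1 a2 := by
    calc ∑ s, ∑ a2, ∑ s', b s * π2 s a2 * T o s' s a1 a2
        = ∑ s, ∑ s', ∑ a2, b s * π2 s a2 * T o s' s a1 a2 :=
          Finset.sum_congr rfl fun s _ => Finset.sum_comm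
      _ = ∑ s'', ∑ s, ∑ a2, b s * π2 s a2 * T o s'' s a1 a2 := Finset.sum_comm
  have hD : 0 < ∑ s'', ∑ s, ∑ a2, b s * π2 s a2 * T o s'' s a1 a2 := by
    rcases mul_pos_iff.1 hpos with ⟨_, h⟩ | ⟨_, h⟩
    · rw [← hDrel]; exact h
    · exact absurd h (not_lt.2 (Finset.sum_nonneg fun s _ => Finset.sum_nonneg fun a2 _ =>
        Finset.sum_nonneg fun s' _ => mul_nonneg (mul_nonneg (hb.1 s) ((hπ2 s).1 a2))
          (hT o s' s a1 a2)))
  constructor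
  · intro s'
    exact div_nonneg (hnn s') hD.le
  · simp only [beliefUpd]
    rw [← Finset.sum_div, div_eq_one_iff_eq hD.ne']

lemma abs_expReward_le (hR : ∀ s a1 a2, |R s a1 a2| ≤ RC)
    (hb : b ∈ stdSimplex ℝ S) (hπ1 : π1 ∈ stdSimplex ℝ A1)
    (hπ2 : ∀ s, π2 s ∈ stdSimplex ℝ A2) :
    |expReward R b π1 π2| ≤ RC := by
  have hw : ∀ s a1 a2, 0 ≤ b s * π1 a1 * π2 s a2 := fun s a1 a2 =>
    mul_nonneg (mul_nonneg (hb.1 s) (hπ1.1 a1)) ((hπ2 s).1 a2)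
  have hwsum : ∑ s, ∑ a1, ∑ a2, b s * π1 a1 * π2 s a2 = 1 := by
    have h2 : ∀ s : S, ∑ a1, ∑ a2, b s * π1 a1 * π2 s a2 = b s := by
      intro s
      calc ∑ a1, ∑ a2, b s * π1 a1 * π2 s a2 = ∑ a1, b s * π1 a1 :=
            Finset.sum_congr rfl fun a1 _ => by
              rw [← Finset.mul_sum, (hπ2 s).2, mul_one]
        _ = b s := by rw [← Finset.mul_sum, hπ1.2, mul_one]
    calc ∑ s, ∑ a1, ∑ a2, b s * π1 a1 * π2 s a2 = ∑ s, b s :=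
          Finset.sum_congr rfl fun s _ => h2 s
      _ = 1 := hb.2
  have habs : |expReward R b π1 π2| ≤ ∑ s, ∑ a1, ∑ a2, (b s * π1 a1 * π2 s a2) * RC := by
    refine (Finset.abs_sum_le_sum_abs _ _).trans (Finset.sum_le_sum fun s _ => ?_)
    refine (Finset.abs_sum_le_sum_abs _ _).trans (Finset.sum_le_sum fun a1 _ => ?_)
    refine (Finset.abs_sum_le_sum_abs _ _).trans (Finset.sum_le_sum fun a2 _ => ?_)
    rw [abs_mul, abs_of_nonneg (hw s a1 a2)]
    exact mul_le_mul_of_nonneg_left (hR s a1 a2) (hw s a1 a2)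
  calc |expReward R b π1 π2| ≤ ∑ s, ∑ a1, ∑ a2, (b s * π1 a1 * π2 s a2) * RC := habs
    _ = (∑ s, ∑ a1, ∑ a2, b s * π1 a1 * π2 s a2) * RC := by simp [Finset.sum_mul]
    _ = RC := by rw [hwsum, one_mul]

lemma abs_stageVal_le (hT : ∀ o s' s a1 a2, 0 ≤ T o s' s a1 a2)
    (hTsum : ∀ s a1 a2, ∑ o, ∑ s', T o s' s a1 a2 = 1) (hγ0 : 0 ≤ γ)
    (hR : ∀ s a1 a2, |R s a1 a2| ≤ RC) (hC : 0 ≤ C)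
    (hV : ∀ τ ∈ stdSimplex ℝ S, |V τ| ≤ C)
    (hb : b ∈ stdSimplex ℝ S) (hπ1 : π1 ∈ stdSimplex ℝ A1)
    (hπ2 : ∀ s, π2 s ∈ stdSimplex ℝ A2) :
    |stageVal T R γ V b π1 π2| ≤ RC + γ * C := by
  have hQ : |∑ a1, ∑ o, if 0 < prObs T b π1 π2 a1 o then
      prObs T b π1 π2 a1 o * V (beliefUpd T b π2 a1 o) else 0| ≤ C := by
    have hterm : ∀ (a1 : A1) (o : O),
        |if 0 < prObs T b π1 π2 a1 o then
          prObs T b π1 π2 a1 o * V (beliefUpd T b π2 a1 o) else 0|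
        ≤ prObs T b π1 π2 a1 o * C := by
      intro a1 o
      by_cases hpos : 0 < prObs T b π1 π2 a1 o
      · rw [if_pos hpos, abs_mul, abs_of_pos hpos]
        exact mul_le_mul_of_nonneg_left
          (hV _ (beliefUpd_mem hT hb hπ1 hπ2 hpos)) hpos.le
      · rw [if_neg hpos, abs_zero]
        exact mul_nonneg (prObs_nonneg hT hb hπ1 hπ2 a1 o) hC
    calc |∑ a1, ∑ o, if 0 < prObs T b π1 π2 a1 o then
          prObs T b π1 π2 a1 o * V (beliefUpd T b π2 a1 o) else 0|
        ≤ ∑ a1, ∑ o, prObs T b π1 π2 a1 o * C := by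
          refine (Finset.abs_sum_le_sum_abs _ _).trans (Finset.sum_le_sum fun a1 _ => ?_)
          exact (Finset.abs_sum_le_sum_abs _ _).trans (Finset.sum_le_sum fun o _ => hterm a1 o)
      _ = (∑ a1, ∑ o, prObs T b π1 π2 a1 o) * C := by simp [Finset.sum_mul]
      _ = C := by rw [sum_prObs hTsum hb hπ1 hπ2, one_mul]
  calc |stageVal T R γ V b π1 π2|
      ≤ |expReward R b π1 π2| + |γ * ∑ a1, ∑ o, if 0 < prObs T b π1 π2 a1 o then
          prObs T b π1 π2 a1 o * V (beliefUpd T b π2 a1 o) else 0| := abs_add_le _ _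
    _ ≤ RC + γ * C := by
        refine add_le_add (abs_expReward_le hR hb hπ1 hπ2) ?_
        rw [abs_mul, abs_of_nonneg hγ0]
        exact mul_le_mul_of_nonneg_left hQ hγ0

lemma stageVal_mono (hT : ∀ o s' s a1 a2, 0 ≤ T o s' s a1 a2) (hγ0 : 0 ≤ γ)
    (hb : b ∈ stdSimplex ℝ S) (hπ1 : π1 ∈ stdSimplex ℝ A1)
    (hπ2 : ∀ s, π2 s ∈ stdSimplex ℝ A2)
    (hmono : ∀ τ ∈ stdSimplex ℝ S, V1 τ ≤ V2 τ) :
    stageVal T R γ V1 b π1 π2 ≤ stageVal T R γ V2 b π1 π2 := by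
  unfold stageVal
  refine add_le_add (le_refl _) (mul_le_mul_of_nonneg_left ?_ hγ0)
  refine Finset.sum_le_sum fun a1 _ => Finset.sum_le_sum fun o _ => ?_
  by_cases hpos : 0 < prObs T b π1 π2 a1 o
  · rw [if_pos hpos, if_pos hpos]
    exact mul_le_mul_of_nonneg_left
      (hmono _ (beliefUpd_mem hT hb hπ1 hπ2 hpos)) hpos.le
  · rw [if_neg hpos, if_neg hpos]

variable [Nonempty S] [Nonempty A1] [Nonempty A2] [Nonempty O]

lemma abs_supStage_le (hT : ∀ o s' s a1 a2, 0 ≤ T o s' s a1 a2)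
    (hTsum : ∀ s a1 a2, ∑ o, ∑ s', T o s' s a1 a2 = 1) (hγ0 : 0 ≤ γ)
    (hR : ∀ s a1 a2, |R s a1 a2| ≤ RC) (hC : 0 ≤ C)
    (hV : ∀ τ ∈ stdSimplex ℝ S, |V τ| ≤ C)
    (hb : b ∈ stdSimplex ℝ S) (hπ2 : ∀ s, π2 s ∈ stdSimplex ℝ A2) :
    |⨆ π1 : {π1 : A1 → ℝ // π1 ∈ stdSimplex ℝ A1},
      stageVal T R γ V b π1.1 π2| ≤ RC + γ * C := by
  haveI : Nonempty {π1 : A1 → ℝ // π1 ∈ stdSimplex ℝ A1} :=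
    ⟨⟨_, uniform_mem_simplex A1⟩⟩
  have hst : ∀ π1 : {π1 : A1 → ℝ // π1 ∈ stdSimplex ℝ A1},
      |stageVal T R γ V b π1.1 π2| ≤ RC + γ * C :=
    fun π1 => abs_stageVal_le hT hTsum hγ0 hR hC hV hb π1.2 hπ2
  have hbdd : BddAbove (Set.range fun π1 : {π1 : A1 → ℝ // π1 ∈ stdSimplex ℝ A1} =>
      stageVal T R γ V b π1.1 π2) := by
    refine ⟨RC + γ * C, ?_⟩
    rintro y ⟨π1, rfl⟩
    exact (abs_le.1 (hst π1)).2
  rw [abs_le]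
  constructor
  · exact le_ciSup_of_le hbdd (Classical.arbitrary _)
      (abs_le.1 (hst (Classical.arbitrary _))).1
  · exact ciSup_le fun π1 => (abs_le.1 (hst π1)).2

lemma abs_Hop_le (hT : ∀ o s' s a1 a2, 0 ≤ T o s' s a1 a2)
    (hTsum : ∀ s a1 a2, ∑ o, ∑ s', T o s' s a1 a2 = 1) (hγ0 : 0 ≤ γ)
    (hR : ∀ s a1 a2, |R s a1 a2| ≤ RC) (hC : 0 ≤ C)
    (hV : ∀ τ ∈ stdSimplex ℝ S, |V τ| ≤ C) (hb : b ∈ stdSimplex ℝ S) :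
    |Hop T R γ V b| ≤ RC + γ * C := by
  haveI : Nonempty {π2 : S → A2 → ℝ // ∀ s, π2 s ∈ stdSimplex ℝ A2} :=
    ⟨⟨fun _ => _, fun _ => uniform_mem_simplex A2⟩⟩
  have hsup : ∀ π2 : {π2 : S → A2 → ℝ // ∀ s, π2 s ∈ stdSimplex ℝ A2},
      |⨆ π1 : {π1 : A1 → ℝ // π1 ∈ stdSimplex ℝ A1},
        stageVal T R γ V b π1.1 π2.1| ≤ RC + γ * C :=
    fun π2 => abs_supStage_le hT hTsum hγ0 hR hC hV hb π2.2
  rw [abs_le]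
  constructor
  · exact le_ciInf fun π2 => (abs_le.1 (hsup π2)).1
  · refine (ciInf_le ⟨-(RC + γ * C), ?_⟩ (Classical.arbitrary _)).trans
      (abs_le.1 (hsup (Classical.arbitrary _))).2
    rintro y ⟨π2, rfl⟩
    exact (abs_le.1 (hsup π2)).1

lemma Hop_mono (hT : ∀ o s' s a1 a2, 0 ≤ T o s' s a1 a2)
    (hTsum : ∀ s a1 a2, ∑ o, ∑ s', T o s' s a1 a2 = 1) (hγ0 : 0 ≤ γ)
    (hR : ∀ s a1 a2, |R s a1 a2| ≤ RC) (hC1 : 0 ≤ C1) (hC2 : 0 ≤ C2)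
    (hV1 : ∀ τ ∈ stdSimplex ℝ S, |V1 τ| ≤ C1)
    (hV2 : ∀ τ ∈ stdSimplex ℝ S, |V2 τ| ≤ C2)
    (hb : b ∈ stdSimplex ℝ S)
    (hmono : ∀ τ ∈ stdSimplex ℝ S, V1 τ ≤ V2 τ) :
    Hop T R γ V1 b ≤ Hop T R γ V2 b := by
  haveI : Nonempty {π1 : A1 → ℝ // π1 ∈ stdSimplex ℝ A1} :=
    ⟨⟨_, uniform_mem_simplex A1⟩⟩
  refine ciInf_mono ⟨-(RC + γ * C1), ?_⟩ fun π2 => ?_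
  · rintro y ⟨π2, rfl⟩
    exact (abs_le.1 (abs_supStage_le hT hTsum hγ0 hR hC1 hV1 hb π2.2)).1
  · refine ciSup_mono ⟨RC + γ * C2, ?_⟩ fun π1 =>
      stageVal_mono hT hγ0 hb π1.2 π2.2 hmono
    rintro y ⟨π1, rfl⟩
    exact (abs_le.1 (abs_stageVal_le hT hTsum hγ0 hR hC2 hV2 hb π1.2 π2.2)).2

lemma Habs_eq_iInf_Hop {k : ℕ} (A : Matrix (Fin k) S ℝ) (W : (Fin k → ℝ) → ℝ)
    (χ : Fin k → ℝ) :
    Habs T R γ A W χ = ⨅ b : {b : S → ℝ // b ∈ stdSimplex ℝ S ∧ A.mulVec b = χ},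
      Hop T R γ (fun b' => W (A.mulVec b')) b.1 := rfl

lemma abs_Habs_le {k : ℕ} {A : Matrix (Fin k) S ℝ} {W : (Fin k → ℝ) → ℝ}
    (hT : ∀ o s' s a1 a2, 0 ≤ T o s' s a1 a2)
    (hTsum : ∀ s a1 a2, ∑ o, ∑ s', T o s' s a1 a2 = 1) (hγ0 : 0 ≤ γ)
    (hR : ∀ s a1 a2, |R s a1 a2| ≤ RC) (hC : 0 ≤ C)
    (hW : ∀ τ ∈ stdSimplex ℝ S, |W (A.mulVec τ)| ≤ C) (hb : b ∈ stdSimplex ℝ S) :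
    |Habs T R γ A W (A.mulVec b)| ≤ RC + γ * C := by
  haveI : Nonempty {b' : S → ℝ // b' ∈ stdSimplex ℝ S ∧ A.mulVec b' = A.mulVec b} :=
    ⟨⟨b, hb, rfl⟩⟩
  rw [Habs_eq_iInf_Hop]
  have hH : ∀ b' : {b' : S → ℝ // b' ∈ stdSimplex ℝ S ∧ A.mulVec b' = A.mulVec b},
      |Hop T R γ (fun b'' => W (A.mulVec b'')) b'.1| ≤ RC + γ * C :=
    fun b' => abs_Hop_le hT hTsum hγ0 hR hC hW b'.2.1
  rw [abs_le]
  constructor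
  · exact le_ciInf fun b' => (abs_le.1 (hH b')).1
  · refine (ciInf_le ⟨-(RC + γ * C), ?_⟩ (Classical.arbitrary _)).trans
      (abs_le.1 (hH (Classical.arbitrary _))).2
    rintro y ⟨b', rfl⟩
    exact (abs_le.1 (hH b')).1

lemma Habs_le_Hop {k : ℕ} {A : Matrix (Fin k) S ℝ} {W : (Fin k → ℝ) → ℝ}
    (hT : ∀ o s' s a1 a2, 0 ≤ T o s' s a1 a2)
    (hTsum : ∀ s a1 a2, ∑ o, ∑ s', T o s' s a1 a2 = 1) (hγ0 : 0 ≤ γ)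
    (hR : ∀ s a1 a2, |R s a1 a2| ≤ RC) (hC : 0 ≤ C)
    (hW : ∀ τ ∈ stdSimplex ℝ S, |W (A.mulVec τ)| ≤ C) (hb : b ∈ stdSimplex ℝ S) :
    Habs T R γ A W (A.mulVec b) ≤ Hop T R γ (fun b' => W (A.mulVec b')) b := by
  rw [Habs_eq_iInf_Hop]
  refine ciInf_le ⟨-(RC + γ * C), ?_⟩
    (⟨b, hb, rfl⟩ : {b' : S → ℝ // b' ∈ stdSimplex ℝ S ∧ A.mulVec b' = A.mulVec b})
  rintro y ⟨b', rfl⟩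
  exact (abs_le.1 (abs_Hop_le hT hTsum hγ0 hR hC hW b'.2.1)).1

end Lemmas

open Filter Topology in
/-- Theorem 1, limit form: the value function of the summarized abstraction
is a lower bound on the value of the original game. -/
theorem abstract_value_lower_bounds_limit
    {S A1 A2 O : Type*} [Fintype S] [Fintype A1] [Fintype A2] [Fintype O]
    [Nonempty S] [Nonempty A1] [Nonempty A2] [Nonempty O] {k : ℕ}
    (T : O → S → S → A1 → A2 → ℝ) (R : S → A1 → A2 → ℝ) (γ : ℝ)
    (hT : ∀ o s' s a1 a2, 0 ≤ T o s' s a1 a2)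
    (hTsum : ∀ s a1 a2, ∑ o, ∑ s', T o s' s a1 a2 = 1)
    (hγ0 : 0 ≤ γ) (hγ1 : γ < 1)
    (A : Matrix (Fin k) S ℝ)
    (W0 : (Fin k → ℝ) → ℝ) (hW0 : ∃ C, ∀ χ, |W0 χ| ≤ C)
    (Wt : ℕ → (Fin k → ℝ) → ℝ) (Vt : ℕ → (S → ℝ) → ℝ)
    (hWt0 : Wt 0 = W0) (hVt0 : ∀ b, Vt 0 b = W0 (A.mulVec b))
    (hWtS : ∀ t, Wt (t + 1) = Habs T R γ A (Wt t))
    (hVtS : ∀ t, Vt (t + 1) = Hop T R γ (Vt t))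
    (Vstar : (S → ℝ) → ℝ) (Wstar : (Fin k → ℝ) → ℝ)
    (hVconv : ∀ b ∈ stdSimplex ℝ S, Tendsto (fun t => Vt t b) atTop (𝓝 (Vstar b)))
    (hWconv : ∀ χ ∈ A.mulVec '' stdSimplex ℝ S,
      Tendsto (fun t => Wt t χ) atTop (𝓝 (Wstar χ))) :
    ∀ b ∈ stdSimplex ℝ S, Wstar (A.mulVec b) ≤ Vstar b := by
  obtain ⟨C0, hC0⟩ := hW0
  set RC : ℝ := ∑ s, ∑ a1, ∑ a2, |R s a1 a2| with hRCdef
  have hR : ∀ s a1 a2, |R s a1 a2| ≤ RC := by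
    intro s a1 a2
    have h3 : |R s a1 a2| ≤ ∑ a2', |R s a1 a2'| :=
      Finset.single_le_sum (f := fun a2' => |R s a1 a2'|)
        (fun _ _ => abs_nonneg _) (Finset.mem_univ a2)
    have h2 : ∑ a2', |R s a1 a2'| ≤ ∑ a1', ∑ a2', |R s a1' a2'| :=
      Finset.single_le_sum (f := fun a1' => ∑ a2', |R s a1' a2'|)
        (fun _ _ => Finset.sum_nonneg fun _ _ => abs_nonneg _) (Finset.mem_univ a1)
    have h1 : ∑ a1', ∑ a2', |R s a1' a2'| ≤ RC :=
      Finset.single_le_sum (f := fun s' => ∑ a1', ∑ a2', |R s' a1' a2'|)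
        (fun _ _ => Finset.sum_nonneg fun _ _ => Finset.sum_nonneg fun _ _ => abs_nonneg _)
        (Finset.mem_univ s)
    exact h3.trans (h2.trans h1)
  have hRC0 : 0 ≤ RC :=
    Finset.sum_nonneg fun _ _ => Finset.sum_nonneg fun _ _ =>
      Finset.sum_nonneg fun _ _ => abs_nonneg _
  have hbound : ∀ t, ∃ C, 0 ≤ C ∧ (∀ b ∈ stdSimplex ℝ S, |Vt t b| ≤ C) ∧
      (∀ b ∈ stdSimplex ℝ S, |Wt t (A.mulVec b)| ≤ C) := by
    intro t
    induction t with
    | zero =>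
      refine ⟨max C0 0, le_max_right _ _, ?_, ?_⟩
      · intro b hb; rw [hVt0]; exact (hC0 _).trans (le_max_left _ _)
      · intro b hb; rw [hWt0]; exact (hC0 _).trans (le_max_left _ _)
    | succ t ih =>
      obtain ⟨C, hC, hV, hW⟩ := ih
      refine ⟨RC + γ * C, by positivity, ?_, ?_⟩
      · intro b hb
        rw [hVtS]
        exact abs_Hop_le hT hTsum hγ0 hR hC hV hb
      · intro b hb
        rw [hWtS]
        exact abs_Habs_le hT hTsum hγ0 hR hC hW hb
  have hineq : ∀ t, ∀ b ∈ stdSimplex ℝ S, Wt t (A.mulVec b) ≤ Vt t b := by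
    intro t
    induction t with
    | zero => intro b hb; rw [hVt0, hWt0]
    | succ t ih =>
      intro b hb
      obtain ⟨C, hC, hV, hW⟩ := hbound t
      rw [hVtS, hWtS]
      calc Habs T R γ A (Wt t) (A.mulVec b)
          ≤ Hop T R γ (fun b' => Wt t (A.mulVec b')) b :=
            Habs_le_Hop hT hTsum hγ0 hR hC hW hb
        _ ≤ Hop T R γ (Vt t) b :=
            Hop_mono hT hTsum hγ0 hR hC hC hW hV hb fun τ hτ => ih τ hτ
  intro b hb
  exact le_of_tendsto_of_tendsto' (hWconv _ ⟨b, hb, rfl⟩) (hVconv b hb)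
    fun t => hineq t b hb
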